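/- Let A_k be the recursive EQ matrix construction starting from A₀ = [1], and suppose A_k x = z for some x ∈ {0,1}^{n_k}. Write z = (z⁽¹⁾, z⁽²⁾) and x = (x⁽¹⁾, x⁽²⁾, x⁽³⁾) according to the block structure A_k = [[A_{k-1}, A_{k-1}, I],[A_{k-1}, -A_{k-1}, 0]]. Then x⁽³⁾ = (z⁽¹⁾ + z⁽²⁾) mod 2 (entrywise), A_{k-1}x⁽¹⁾ = (z⁽¹⁾ + z⁽²⁾ - x⁽³⁾)/2, and A_{k-1}x⁽²⁾ = (z⁽¹⁾ - z⁽²⁾ - x⁽³⁾)/2. -/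
import Mathlib

theorem stmt_19 (m n : ℕ) (A : Matrix (Fin m) (Fin n) ℤ)
    (Ak : Matrix (Fin m ⊕ Fin m) ((Fin n ⊕ Fin n) ⊕ Fin m) ℤ)
    (hAk : Ak = Matrix.fromBlocks
      (Matrix.of fun i j => Sum.elim (A i) (A i) j) (1 : Matrix (Fin m) (Fin m) ℤ)
      (Matrix.of fun i j => Sum.elim (A i) (-(A i)) j) (0 : Matrix (Fin m) (Fin m) ℤ))
    (x : (Fin n ⊕ Fin n) ⊕ Fin m → ℤ) (hx : ∀ j, x j ∈ ({0, 1} : Set ℤ))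
    (z : Fin m ⊕ Fin m → ℤ) (hz : Ak.mulVec x = z) :
    (∀ t, x (Sum.inr t) = (z (Sum.inl t) + z (Sum.inr t)) % 2) ∧
    (∀ t, A.mulVec (fun j => x (Sum.inl (Sum.inl j))) t
        = (z (Sum.inl t) + z (Sum.inr t) - x (Sum.inr t)) / 2) ∧
    (∀ t, A.mulVec (fun j => x (Sum.inl (Sum.inr j))) t
        = (z (Sum.inl t) - z (Sum.inr t) - x (Sum.inr t)) / 2) := by
  have key : ∀ t, z (Sum.inl t) = A.mulVec (fun j => x (Sum.inl (Sum.inl j))) t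
      + A.mulVec (fun j => x (Sum.inl (Sum.inr j))) t + x (Sum.inr t) ∧
      z (Sum.inr t) = A.mulVec (fun j => x (Sum.inl (Sum.inl j))) t
      - A.mulVec (fun j => x (Sum.inl (Sum.inr j))) t := by
    intro t
    constructor
    · rw [← hz]
      simp [hAk, Matrix.mulVec, dotProduct, Fintype.sum_sum_type,
        Matrix.one_apply, Finset.sum_add_distrib, mul_ite, Finset.sum_ite_eq]
    · rw [← hz]
      simp [hAk, Matrix.mulVec, dotProduct, Fintype.sum_sum_type,
        Finset.sum_sub_distrib, sub_eq_add_neg]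
  refine ⟨?_, ?_, ?_⟩ <;> intro t <;>
    obtain ⟨h1, h2⟩ := key t <;>
    have he := hx (Sum.inr t) <;>
    simp only [Set.mem_insert_iff, Set.mem_singleton_iff] at he <;>
    omega
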